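/- Let k ∈ ℕ, k ≥ 2, let y ∈ (0,1), and let ρ : [0,1] → ℝ be continuous. Suppose P_k and q_k are algebraic polynomials of degree at most k with P_k(u) ≤ Φ(u) ≤ q_k(u) for all u ∈ [−1, 1]. Define L_{k,y}(ρ) = M_k(G_y(ρ)) and J_{k,y}(ρ) = N_k(H_y(ρ)). Then L_{k,y}(ρ) and J_{k,y}(ρ) are polynomials of degree at most k and L_{k,y}(ρ, x) ≤ ρ(x) ≤ J_{k,y}(ρ, x) for every x ∈ [0,1]. (Theorem 4.2, sandwich part.) -/

import Mathlib

open MeasureTheory Set Real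

/-- Local modulus of continuity of `ρ` at `x` with radius `δ`, relative to `[0,1]`. -/
noncomputable def omegaMod (ρ : ℝ → ℝ) (x δ : ℝ) : ℝ :=
  sSup {d : ℝ | ∃ u ∈ Icc (x - δ) (x + δ) ∩ Icc (0:ℝ) 1,
    ∃ v ∈ Icc (x - δ) (x + δ) ∩ Icc (0:ℝ) 1, d = |ρ u - ρ v|}

/-- One-sided operator `G_y`. -/
noncomputable def Gop (y : ℝ) (ρ : ℝ → ℝ) (x : ℝ) : ℝ :=
  ∫ t in (0:ℝ)..1, (ρ ((1 - y) * x + y * t) - omegaMod ρ ((1 - y) * x + y * t) y)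

/-- One-sided operator `H_y`. -/
noncomputable def Hop (y : ℝ) (ρ : ℝ → ℝ) (x : ℝ) : ℝ :=
  ∫ t in (0:ℝ)..1, (ρ ((1 - y) * x + y * t) + omegaMod ρ ((1 - y) * x + y * t) y)

/-- `L^p` norm on `[0,1]`. -/
noncomputable def lpNorm (p : ℝ) (f : ℝ → ℝ) : ℝ :=
  (∫ x in (0:ℝ)..1, |f x| ^ p) ^ (1 / p)

/-- Averaged modulus of smoothness `τ(ρ, δ)_p`. -/
noncomputable def tau (p : ℝ) (ρ : ℝ → ℝ) (δ : ℝ) : ℝ :=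
  lpNorm p (fun x => omegaMod ρ x δ)

/-- The step function `Φ`. -/
noncomputable def stepPhi (x : ℝ) : ℝ := if 0 < x then 1 else 0

/-- Operator `M_k` built from polynomials `P ≤ Φ ≤ Q`, applied to `f` with
`f x = f 0 + ∫_0^x g`. -/
noncomputable def Mop (P Q : Polynomial ℝ) (f0 : ℝ) (g : ℝ → ℝ) (x : ℝ) : ℝ :=
  f0 + (∫ t in (0:ℝ)..1, P.eval (x - t) * max (g t) 0)
     - ∫ t in (0:ℝ)..1, Q.eval (x - t) * max (-g t) 0

/-- Operator `N_k` built from polynomials `P ≤ Φ ≤ Q`, applied to `f` with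
`f x = f 0 + ∫_0^x g`. -/
noncomputable def Nop (P Q : Polynomial ℝ) (f0 : ℝ) (g : ℝ → ℝ) (x : ℝ) : ℝ :=
  f0 + (∫ t in (0:ℝ)..1, Q.eval (x - t) * max (g t) 0)
     - ∫ t in (0:ℝ)..1, P.eval (x - t) * max (-g t) 0

/-- Degree of best one-sided approximation by polynomials of degree at most `k`. -/
noncomputable def bestE (p : ℝ) (k : ℕ) (ρ : ℝ → ℝ) : ℝ :=
  sInf {c : ℝ | ∃ P Q : Polynomial ℝ, P.natDegree ≤ k ∧ Q.natDegree ≤ k ∧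
    (∀ x ∈ Icc (0:ℝ) 1, P.eval x ≤ ρ x ∧ ρ x ≤ Q.eval x) ∧
    c = lpNorm p (fun x => Q.eval x - P.eval x)}

namespace Stmt9Aux

def omegaSet (ρ : ℝ → ℝ) (x δ : ℝ) : Set ℝ :=
  {d : ℝ | ∃ u ∈ Icc (x - δ) (x + δ) ∩ Icc (0:ℝ) 1,
    ∃ v ∈ Icc (x - δ) (x + δ) ∩ Icc (0:ℝ) 1, d = |ρ u - ρ v|}

lemma omegaMod_eq (ρ : ℝ → ℝ) (x δ : ℝ) : omegaMod ρ x δ = sSup (omegaSet ρ x δ) := rfl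

variable {ρ : ℝ → ℝ} (hρ : ContinuousOn ρ (Icc 0 1))

include hρ in
lemma bddAbove_omegaSet (x δ : ℝ) : BddAbove (omegaSet ρ x δ) := by
  obtain ⟨C, hC⟩ := isCompact_Icc.exists_bound_of_continuousOn hρ
  refine ⟨C + C, ?_⟩
  rintro d ⟨u, ⟨-, hu⟩, v, ⟨-, hv⟩, rfl⟩
  have h1 := hC u hu
  have h2 := hC v hv
  rw [Real.norm_eq_abs] at h1 h2
  calc |ρ u - ρ v| ≤ |ρ u| + |ρ v| := abs_sub _ _
    _ ≤ C + C := add_le_add h1 h2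

include hρ in
lemma abs_sub_le_omegaMod {s x δ : ℝ} (hδ : 0 ≤ δ) (hs : s ∈ Icc (0:ℝ) 1)
    (hx : x ∈ Icc (0:ℝ) 1) (hsx : |s - x| ≤ δ) : |ρ s - ρ x| ≤ omegaMod ρ s δ := by
  rw [omegaMod_eq]
  refine le_csSup (bddAbove_omegaSet hρ s δ) ?_
  rw [abs_le] at hsx
  exact ⟨s, ⟨⟨by linarith, by linarith⟩, hs⟩, x, ⟨⟨by linarith, by linarith⟩, hx⟩, rfl⟩

include hρ in
lemma omegaMod_nonneg {x δ : ℝ} (hδ : 0 ≤ δ) (hx : x ∈ Icc (0:ℝ) 1) :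
    0 ≤ omegaMod ρ x δ := by
  have := abs_sub_le_omegaMod hρ hδ hx hx (by simp [hδ])
  simpa using this



lemma clamp_abs {y p q u : ℝ} (hq : max (q - y) 0 ≤ min (q + y) 1)
    (hu1 : max (p - y) 0 ≤ u) (hu2 : u ≤ min (p + y) 1) :
    |max (max (q - y) 0) (min u (min (q + y) 1)) - u| ≤ |q - p| := by
  set aq := max (q - y) 0 with haq
  set bq := min (q + y) 1 with hbq
  have hab : |aq - max (p - y) 0| ≤ |q - p| := by
    have := abs_max_sub_max_le_abs (q - y) (p - y) 0; simpa using this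
  have hbb : |bq - min (p + y) 1| ≤ |q - p| := by
    have := abs_min_sub_min_le_max (q + y) 1 (p + y) 1; simpa using this
  rcases lt_or_ge u aq with h1 | h1
  · rw [min_eq_left (le_trans (le_of_lt h1) hq), max_eq_left (le_of_lt h1)]
    rw [abs_of_nonneg (by linarith)]
    calc aq - u ≤ aq - max (p - y) 0 := by linarith
      _ ≤ |aq - max (p - y) 0| := le_abs_self _
      _ ≤ |q - p| := hab
  · rcases le_or_gt u bq with h2 | h2
    · rw [min_eq_left h2, max_eq_right h1, sub_self, abs_zero]; exact abs_nonneg _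
    · rw [min_eq_right (le_of_lt h2), max_eq_right hq]
      rw [abs_of_nonpos (by linarith)]
      calc -(bq - u) = u - bq := by ring
        _ ≤ min (p + y) 1 - bq := by linarith
        _ ≤ |bq - min (p + y) 1| := by rw [abs_sub_comm]; exact le_abs_self _
        _ ≤ |q - p| := hbb




include hρ in
lemma omega_key {y : ℝ} (hy : 0 < y) {ε : ℝ} (hε : 0 < ε) :
    ∃ δ > 0, ∀ p ∈ Icc (0:ℝ) 1, ∀ q ∈ Icc (0:ℝ) 1, |p - q| < δ →
      omegaMod ρ p y ≤ omegaMod ρ q y + ε := by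
  have huc := isCompact_Icc.uniformContinuousOn_of_continuous hρ
  rw [Metric.uniformContinuousOn_iff] at huc
  obtain ⟨δ, hδ, hmod⟩ := huc (ε/2) (by positivity)
  refine ⟨δ, hδ, ?_⟩
  intro p hp q hq hpq
  have hq' : max (q - y) 0 ≤ min (q + y) 1 := by
    refine le_trans (max_le (by linarith [hq.1]) hq.1) (le_min (by linarith [hq.2]) hq.2)
  rw [omegaMod_eq (ρ := ρ) (x := p)]
  have memp : p ∈ Icc (p - y) (p + y) ∩ Icc (0:ℝ) 1 :=
    ⟨⟨by linarith, by linarith⟩, hp⟩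
  refine csSup_le ⟨|ρ p - ρ p|, p, memp, p, memp, rfl⟩ ?_
  rintro d ⟨u, ⟨hu1, hu2⟩, v, ⟨hv1, hv2⟩, rfl⟩
  set u' := max (max (q - y) 0) (min u (min (q + y) 1)) with hu'
  set v' := max (max (q - y) 0) (min v (min (q + y) 1)) with hv'
  have huu' : |u' - u| ≤ |q - p| :=
    clamp_abs hq' (max_le hu1.1 hu2.1) (le_min hu1.2 hu2.2)
  have hvv' : |v' - v| ≤ |q - p| :=
    clamp_abs hq' (max_le hv1.1 hv2.1) (le_min hv1.2 hv2.2)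
  have memIcc : ∀ w : ℝ, max (max (q - y) 0) (min w (min (q + y) 1)) ∈
      Icc (q - y) (q + y) ∩ Icc (0:ℝ) 1 := by
    intro w
    refine ⟨⟨le_trans (le_max_left (q - y) 0) (le_max_left _ _), ?_⟩,
      le_trans (le_max_right (q - y) 0) (le_max_left _ _), ?_⟩
    · exact le_trans (max_le hq' (min_le_right _ _)) (min_le_left _ _)
    · exact le_trans (max_le hq' (min_le_right _ _)) (min_le_right _ _)
  have hu'mem := memIcc u
  have hv'mem := memIcc v
  have hd1 : dist (ρ u) (ρ u') < ε/2 := by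
    refine hmod u hu2 u' hu'mem.2 ?_
    rw [Real.dist_eq, abs_sub_comm]
    calc |u' - u| ≤ |q - p| := huu'
      _ = |p - q| := abs_sub_comm _ _
      _ < δ := hpq
  have hd2 : dist (ρ v') (ρ v) < ε/2 := by
    refine hmod v' hv'mem.2 v hv2 ?_
    rw [Real.dist_eq]
    calc |v' - v| ≤ |q - p| := hvv'
      _ = |p - q| := abs_sub_comm _ _
      _ < δ := hpq
  have h2 : |ρ u' - ρ v'| ≤ omegaMod ρ q y := by
    rw [omegaMod_eq]
    exact le_csSup (bddAbove_omegaSet hρ q y) ⟨u', hu'mem, v', hv'mem, rfl⟩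
  rw [Real.dist_eq] at hd1 hd2
  calc |ρ u - ρ v| ≤ |ρ u - ρ u'| + |ρ u' - ρ v| := abs_sub_le _ _ _
    _ ≤ |ρ u - ρ u'| + (|ρ u' - ρ v'| + |ρ v' - ρ v|) := by
        linarith [abs_sub_le (ρ u') (ρ v') (ρ v)]
    _ ≤ omegaMod ρ q y + ε := by linarith

include hρ in
lemma omega_continuousOn {y : ℝ} (hy : 0 < y) :
    ContinuousOn (fun x => omegaMod ρ x y) (Icc 0 1) := by
  rw [Metric.continuousOn_iff]
  intro x hx ε hε
  obtain ⟨δ, hδ, hkey⟩ := omega_key hρ hy (show (0:ℝ) < ε/2 by positivity)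
  refine ⟨δ, hδ, fun x' hx' hd => ?_⟩
  rw [Real.dist_eq] at hd ⊢
  have h1 := hkey x' hx' x hx hd
  have h2 := hkey x hx x' hx' (by rwa [abs_sub_comm])
  rw [abs_lt]; constructor <;> linarith

end Stmt9Aux

namespace Stmt9Aux2

variable {y : ℝ} (hy0 : 0 < y) (hy1 : y < 1) {φ : ℝ → ℝ} (hφ : ContinuousOn φ (Icc 0 1))

include hy0 hy1 in
lemma affine_mem {x t : ℝ} (hx : x ∈ Icc (0:ℝ) 1) (ht : t ∈ Icc (0:ℝ) 1) :
    (1 - y) * x + y * t ∈ Icc (0:ℝ) 1 := by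
  constructor
  · have : 0 ≤ (1 - y) * x := mul_nonneg (by linarith) hx.1
    have : 0 ≤ y * t := mul_nonneg (le_of_lt hy0) ht.1
    linarith
  · nlinarith [hx.2, ht.2, mul_le_mul_of_nonneg_left hx.2 (show (0:ℝ) ≤ 1 - y by linarith),
      mul_le_mul_of_nonneg_left ht.2 (le_of_lt hy0)]

include hφ in
lemma phi_int : IntervalIntegrable φ volume 0 1 :=
  hφ.intervalIntegrable_of_Icc (by norm_num)

include hφ in
lemma phi_int_sub {c : ℝ} (h0 : 0 ≤ c) (h1 : c ≤ 1) : IntervalIntegrable φ volume 0 c := by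
  refine (phi_int hφ).mono_set ?_
  rw [uIcc_of_le h0, uIcc_of_le (by norm_num : (0:ℝ) ≤ 1)]
  exact Icc_subset_Icc le_rfl h1

include hy0 hy1 in
lemma bounds_mem {x : ℝ} (hx : x ∈ Icc (0:ℝ) 1) :
    (1 - y) * x ∈ Icc (0:ℝ) 1 ∧ (1 - y) * x + y ∈ Icc (0:ℝ) 1 := by
  have h1 : 0 ≤ (1 - y) * x := mul_nonneg (by linarith) hx.1
  have h2 : (1 - y) * x ≤ 1 - y := by nlinarith [hx.2]
  exact ⟨⟨h1, by linarith⟩, ⟨by linarith, by linarith⟩⟩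

include hy0 hy1 hφ in
lemma Iop_rep {x : ℝ} (hx : x ∈ Icc (0:ℝ) 1) :
    (∫ t in (0:ℝ)..1, φ ((1 - y) * x + y * t)) =
      y⁻¹ * ((∫ s in (0:ℝ)..((1 - y) * x + y), φ s) - ∫ s in (0:ℝ)..((1 - y) * x), φ s) := by
  have h1 : ∀ t : ℝ, (1 - y) * x + y * t = y * t + (1 - y) * x := fun t => by ring
  simp_rw [h1]
  rw [intervalIntegral.integral_comp_mul_add φ (ne_of_gt hy0) ((1 - y) * x)]
  rw [smul_eq_mul]
  congr 1
  have e0 : y * 0 + (1 - y) * x = (1 - y) * x := by ring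
  have e1 : y * 1 + (1 - y) * x = (1 - y) * x + y := by ring
  rw [e0, e1]
  obtain ⟨hm0, hm1⟩ := bounds_mem hy0 hy1 hx
  exact (intervalIntegral.integral_interval_sub_left
    (phi_int_sub hφ hm1.1 hm1.2) (phi_int_sub hφ hm0.1 hm0.2)).symm

include hy0 hy1 hφ in
lemma Iop_cont : ContinuousOn (fun x => ∫ t in (0:ℝ)..1, φ ((1 - y) * x + y * t)) (Icc 0 1) := by
  have hF : ContinuousOn (fun u => ∫ s in (0:ℝ)..u, φ s) (Icc 0 1) := by
    have := intervalIntegral.continuousOn_primitive_interval (a := (0:ℝ)) (b := 1) (μ := volume)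
      (f := φ) (by rw [uIcc_of_le (by norm_num : (0:ℝ) ≤ 1)]; exact hφ.integrableOn_Icc)
    rwa [uIcc_of_le (by norm_num : (0:ℝ) ≤ 1)] at this
  have hc : ContinuousOn (fun x : ℝ => y⁻¹ * ((∫ s in (0:ℝ)..((1 - y) * x + y), φ s)
      - ∫ s in (0:ℝ)..((1 - y) * x), φ s)) (Icc 0 1) := by
    apply ContinuousOn.mul continuousOn_const
    apply ContinuousOn.sub
    · exact hF.comp (by fun_prop) (fun x hx => (bounds_mem hy0 hy1 hx).2)
    · exact hF.comp (by fun_prop) (fun x hx => (bounds_mem hy0 hy1 hx).1)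
  exact hc.congr (fun x hx => Iop_rep hy0 hy1 hφ hx)


noncomputable def psi (y : ℝ) (φ : ℝ → ℝ) (x : ℝ) : ℝ :=
  y⁻¹ * (φ ((1 - y) * x + y) * (1 - y) - φ ((1 - y) * x) * (1 - y))

include hy0 hy1 hφ in
lemma psi_cont : ContinuousOn (psi y φ) (Icc 0 1) := by
  unfold psi
  apply ContinuousOn.mul continuousOn_const
  apply ContinuousOn.sub
  · exact (hφ.comp (by fun_prop) (fun x hx => (bounds_mem hy0 hy1 hx).2)).mul continuousOn_const
  · exact (hφ.comp (by fun_prop) (fun x hx => (bounds_mem hy0 hy1 hx).1)).mul continuousOn_const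

include hy0 hy1 hφ in
lemma Iop_hasDeriv {x : ℝ} (hx : x ∈ Ioo (0:ℝ) 1) :
    HasDerivAt (fun x => ∫ t in (0:ℝ)..1, φ ((1 - y) * x + y * t)) (psi y φ x) x := by
  have hFd : ∀ u ∈ Ioo (0:ℝ) 1, HasDerivAt (fun u => ∫ s in (0:ℝ)..u, φ s) (φ u) u := by
    intro u hu
    refine intervalIntegral.integral_hasDerivAt_right (phi_int_sub hφ hu.1.le hu.2.le) ?_ ?_
    · exact (hφ.mono Ioo_subset_Icc_self).stronglyMeasurableAtFilter isOpen_Ioo u hu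
    · exact hφ.continuousAt (Icc_mem_nhds hu.1 hu.2)
  have hb : (1 - y) * x + y ∈ Ioo (0:ℝ) 1 := by
    constructor <;> nlinarith [hx.1, hx.2]
  have ha : (1 - y) * x ∈ Ioo (0:ℝ) 1 := by
    constructor <;> nlinarith [hx.1, hx.2]
  have l1 : HasDerivAt (fun x : ℝ => (1 - y) * x + y) (1 - y) x := by
    simpa using ((hasDerivAt_id x).const_mul (1 - y)).add_const y
  have l0 : HasDerivAt (fun x : ℝ => (1 - y) * x) (1 - y) x := by
    simpa using (hasDerivAt_id x).const_mul (1 - y)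
  have c1 : HasDerivAt (fun x : ℝ => ∫ s in (0:ℝ)..((1 - y) * x + y), φ s)
      (φ ((1 - y) * x + y) * (1 - y)) x := by
        have := (hFd ((1 - y) * x + y) hb).comp x l1; exact this
  have c0 : HasDerivAt (fun x : ℝ => ∫ s in (0:ℝ)..((1 - y) * x), φ s)
      (φ ((1 - y) * x) * (1 - y)) x := (hFd ((1 - y) * x) ha).comp x l0
  have hder := (c1.sub c0).const_mul y⁻¹
  refine HasDerivAt.congr_of_eventuallyEq hder ?_
  filter_upwards [isOpen_Ioo.mem_nhds hx] with x' hx'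
  exact Iop_rep hy0 hy1 hφ (Ioo_subset_Icc_self hx')

include hy0 hy1 hφ in
lemma Iop_deriv_eq {x : ℝ} (hx : x ∈ Ioo (0:ℝ) 1) :
    deriv (fun x => ∫ t in (0:ℝ)..1, φ ((1 - y) * x + y * t)) x = psi y φ x :=
  (Iop_hasDeriv hy0 hy1 hφ hx).deriv

include hy0 hy1 hφ in
lemma Iop_ae {x : ℝ} (hx : x ∈ Icc (0:ℝ) 1) :
    deriv (fun x => ∫ t in (0:ℝ)..1, φ ((1 - y) * x + y * t))
      =ᵐ[volume.restrict (Ioc (0:ℝ) x)] psi y φ := by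
  have h1 : ∀ᵐ t ∂(volume.restrict (Ioc (0:ℝ) x)), t ∈ Ioc (0:ℝ) x :=
    ae_restrict_mem measurableSet_Ioc
  have h2 : ∀ᵐ t ∂(volume.restrict (Ioc (0:ℝ) x)), t ≠ (1:ℝ) := by
    rw [ae_iff]
    have : {t : ℝ | ¬t ≠ 1} = {1} := by ext t; simp
    rw [this, Measure.restrict_apply (measurableSet_singleton 1)]
    exact measure_mono_null inter_subset_left (measure_singleton 1)
  filter_upwards [h1, h2] with t ht ht1
  exact Iop_deriv_eq hy0 hy1 hφ ⟨ht.1, lt_of_le_of_ne (ht.2.trans hx.2) ht1⟩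

include hy0 hy1 hφ in
lemma Iop_deriv_int {x : ℝ} (hx : x ∈ Icc (0:ℝ) 1) :
    IntervalIntegrable (deriv (fun x => ∫ t in (0:ℝ)..1, φ ((1 - y) * x + y * t))) volume 0 x := by
  rw [intervalIntegrable_iff_integrableOn_Ioc_of_le hx.1]
  have hψ : IntegrableOn (psi y φ) (Ioc (0:ℝ) x) volume :=
    ((psi_cont hy0 hy1 hφ).integrableOn_Icc).mono_set
      ((Ioc_subset_Icc_self).trans (Icc_subset_Icc le_rfl hx.2))
  exact hψ.congr_fun_ae (Iop_ae hy0 hy1 hφ hx).symm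

include hy0 hy1 hφ in
lemma Iop_ftc {x : ℝ} (hx : x ∈ Icc (0:ℝ) 1) :
    (∫ t in (0:ℝ)..x, deriv (fun x => ∫ t in (0:ℝ)..1, φ ((1 - y) * x + y * t)) t) =
      (∫ t in (0:ℝ)..1, φ ((1 - y) * x + y * t)) - ∫ t in (0:ℝ)..1, φ ((1 - y) * 0 + y * t) := by
  refine intervalIntegral.integral_eq_sub_of_hasDeriv_right_of_le hx.1
    ((Iop_cont hy0 hy1 hφ).mono (Icc_subset_Icc le_rfl hx.2)) ?_ (Iop_deriv_int hy0 hy1 hφ hx)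
  intro t ht
  have ht' : t ∈ Ioo (0:ℝ) 1 := ⟨ht.1, lt_of_lt_of_le ht.2 hx.2⟩
  exact ((Iop_hasDeriv hy0 hy1 hφ ht').congr_deriv (Iop_deriv_eq hy0 hy1 hφ ht').symm).hasDerivWithinAt

end Stmt9Aux2

namespace Stmt9Aux3
open Polynomial

lemma ae_ne (x : ℝ) : ∀ᵐ t : ℝ, t ≠ x := by
  rw [ae_iff]
  have h : {t : ℝ | ¬t ≠ x} = {x} := by ext t; simp
  rw [h]
  exact measure_singleton x

lemma stepPhi_meas : Measurable stepPhi := by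
  have h : stepPhi = (Ioi (0:ℝ)).indicator (fun _ => (1:ℝ)) := by
    ext u; simp [stepPhi, Set.indicator_apply, mem_Ioi]
  rw [h]
  exact measurable_const.indicator measurableSet_Ioi

lemma stepPhi_mul_int {m : ℝ → ℝ} (hm : IntervalIntegrable m volume 0 1)
    {x a b : ℝ} (h : uIcc a b ⊆ uIcc (0:ℝ) 1) :
    IntervalIntegrable (fun t => stepPhi (x - t) * m t) volume a b := by
  have hm' := hm.mono_set h
  rw [intervalIntegrable_iff] at hm' ⊢
  refine hm'.bdd_mul (c := 1) ?_ (ae_of_all _ fun t => ?_)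
  · exact ((stepPhi_meas.comp (measurable_const.sub measurable_id)).aestronglyMeasurable)
  · unfold stepPhi; split <;> simp

lemma stepPhi_integral {m : ℝ → ℝ} (hm : IntervalIntegrable m volume 0 1)
    {x : ℝ} (hx : x ∈ Icc (0:ℝ) 1) :
    (∫ t in (0:ℝ)..1, stepPhi (x - t) * m t) = ∫ t in (0:ℝ)..x, m t := by
  have hu01 : uIcc (0:ℝ) 1 = Icc 0 1 := uIcc_of_le (by norm_num)
  have hsub1 : uIcc (0:ℝ) x ⊆ uIcc (0:ℝ) 1 := by
    rw [hu01, uIcc_of_le hx.1]; exact Icc_subset_Icc le_rfl hx.2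
  have hsub2 : uIcc x 1 ⊆ uIcc (0:ℝ) 1 := by
    rw [hu01, uIcc_of_le hx.2]; exact Icc_subset_Icc hx.1 le_rfl
  have hi1 := stepPhi_mul_int hm (x := x) hsub1
  have hi2 := stepPhi_mul_int hm (x := x) hsub2
  rw [← intervalIntegral.integral_add_adjacent_intervals hi1 hi2]
  have e2 : (∫ t in x..1, stepPhi (x - t) * m t) = 0 := by
    rw [intervalIntegral.integral_congr (g := fun _ => (0:ℝ)) ?_, intervalIntegral.integral_zero]
    intro t ht
    rw [uIcc_of_le hx.2] at ht
    have : ¬(0 < x - t) := by simp only [not_lt]; linarith [ht.1]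
    simp only [stepPhi, if_neg this, zero_mul]
  have e1 : (∫ t in (0:ℝ)..x, stepPhi (x - t) * m t) = ∫ t in (0:ℝ)..x, m t := by
    refine intervalIntegral.integral_congr_ae ?_
    filter_upwards [ae_ne x] with t ht hmem
    rw [uIoc_of_le hx.1] at hmem
    have hlt : 0 < x - t := sub_pos.2 (lt_of_le_of_ne hmem.2 ht)
    simp only [stepPhi, if_pos hlt, one_mul]
  rw [e1, e2, add_zero]

lemma poly_rep {k : ℕ} (R : Polynomial ℝ) (hR : R.natDegree ≤ k) {m : ℝ → ℝ}
    (hm : IntervalIntegrable m volume 0 1) :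
    ∃ S : Polynomial ℝ, S.natDegree ≤ k ∧ ∀ x : ℝ,
      (∫ t in (0:ℝ)..1, R.eval (x - t) * m t) = S.eval x := by
  refine ⟨∑ j ∈ Finset.range (k + 1),
    C (∫ t in (0:ℝ)..1, (hasseDeriv j R).eval (-t) * m t) * X ^ j, ?_, ?_⟩
  · refine natDegree_sum_le_of_forall_le _ _ fun j hj => ?_
    exact le_trans (natDegree_C_mul_X_pow_le _ j) (Nat.lt_succ_iff.mp (Finset.mem_range.mp hj))
  · intro x
    have h1 : ∀ t : ℝ, R.eval (x - t) =
        ∑ j ∈ Finset.range (k + 1), (hasseDeriv j R).eval (-t) * x ^ j := by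
      intro t
      have h2 : R.eval (x - t) = (taylor (-t) R).eval x := by
        rw [taylor_apply, eval_comp]; simp [sub_eq_add_neg]
      rw [h2, eval_eq_sum_range' (n := k + 1) (by rw [natDegree_taylor]; omega)]
      simp_rw [taylor_coeff]
    have h3 : (∫ t in (0:ℝ)..1, R.eval (x - t) * m t) =
        ∫ t in (0:ℝ)..1, ∑ j ∈ Finset.range (k + 1),
          ((hasseDeriv j R).eval (-t) * m t) * x ^ j := by
      refine intervalIntegral.integral_congr fun t _ => ?_
      rw [h1 t, Finset.sum_mul]
      exact Finset.sum_congr rfl fun j _ => by ring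
    rw [h3, intervalIntegral.integral_finset_sum]
    · simp only [eval_finset_sum, eval_mul, eval_C, eval_pow, eval_X]
      refine Finset.sum_congr rfl fun j _ => ?_
      rw [intervalIntegral.integral_mul_const]
    · intro j hj
      refine IntervalIntegrable.mul_const ?_ (x ^ j)
      refine hm.continuousOn_mul ?_
      exact ((hasseDeriv j R).continuous_aeval.comp continuous_neg).continuousOn

end Stmt9Aux3

/-- Theorem 4.2, sandwich part: `L_{k,y}(ρ) = M_k(G_y(ρ))` and `J_{k,y}(ρ) = N_k(H_y(ρ))`
are polynomials of degree at most `k` sandwiching `ρ`. -/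
theorem stmt9 (k : ℕ) (hk : 2 ≤ k) (P Q : Polynomial ℝ)
    (hPdeg : P.natDegree ≤ k) (hQdeg : Q.natDegree ≤ k)
    (hPQ : ∀ u ∈ Icc (-1:ℝ) 1, P.eval u ≤ stepPhi u ∧ stepPhi u ≤ Q.eval u)
    (y : ℝ) (hy : y ∈ Ioo (0:ℝ) 1)
    (ρ : ℝ → ℝ) (hρ : ContinuousOn ρ (Icc (0:ℝ) 1)) :
    (∃ L' : Polynomial ℝ, L'.natDegree ≤ k ∧ ∀ x ∈ Icc (0:ℝ) 1,
      Mop P Q (Gop y ρ 0) (deriv (Gop y ρ)) x = L'.eval x) ∧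
    (∃ J' : Polynomial ℝ, J'.natDegree ≤ k ∧ ∀ x ∈ Icc (0:ℝ) 1,
      Nop P Q (Hop y ρ 0) (deriv (Hop y ρ)) x = J'.eval x) ∧
    (∀ x ∈ Icc (0:ℝ) 1,
      Mop P Q (Gop y ρ 0) (deriv (Gop y ρ)) x ≤ ρ x ∧
      ρ x ≤ Nop P Q (Hop y ρ 0) (deriv (Hop y ρ)) x) := by
  classical
  obtain ⟨hy0, hy1⟩ := hy
  have hω := Stmt9Aux.omega_continuousOn hρ hy0
  have hφm : ContinuousOn (fun s => ρ s - omegaMod ρ s y) (Icc 0 1) := hρ.sub hω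
  have hφp : ContinuousOn (fun s => ρ s + omegaMod ρ s y) (Icc 0 1) := hρ.add hω
  have h01 : (0:ℝ) ∈ Icc (0:ℝ) 1 := by norm_num
  have h11 : (1:ℝ) ∈ Icc (0:ℝ) 1 := by norm_num
  -- FTC for G
  have hGftc : ∀ x ∈ Icc (0:ℝ) 1,
      (∫ t in (0:ℝ)..x, deriv (Gop y ρ) t) = Gop y ρ x - Gop y ρ 0 := by
    intro x hx
    exact Stmt9Aux2.Iop_ftc hy0 hy1 hφm hx
  have hHftc : ∀ x ∈ Icc (0:ℝ) 1,
      (∫ t in (0:ℝ)..x, deriv (Hop y ρ) t) = Hop y ρ x - Hop y ρ 0 := by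
    intro x hx
    exact Stmt9Aux2.Iop_ftc hy0 hy1 hφp hx
  -- a.e. identification of the derivatives with continuous functions
  have hGae : deriv (Gop y ρ) =ᵐ[volume.restrict (Ioc (0:ℝ) 1)]
      Stmt9Aux2.psi y (fun s => ρ s - omegaMod ρ s y) :=
    Stmt9Aux2.Iop_ae hy0 hy1 hφm h11
  have hHae : deriv (Hop y ρ) =ᵐ[volume.restrict (Ioc (0:ℝ) 1)]
      Stmt9Aux2.psi y (fun s => ρ s + omegaMod ρ s y) :=
    Stmt9Aux2.Iop_ae hy0 hy1 hφp h11
  have hGψc := Stmt9Aux2.psi_cont hy0 hy1 hφm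
  have hHψc := Stmt9Aux2.psi_cont hy0 hy1 hφp
  -- integrability of positive/negative parts
  have hparts : ∀ (g ψ : ℝ → ℝ), ContinuousOn ψ (Icc (0:ℝ) 1) →
      (g =ᵐ[volume.restrict (Ioc (0:ℝ) 1)] ψ) →
      IntervalIntegrable (fun t => max (g t) 0) volume 0 1 ∧
      IntervalIntegrable (fun t => max (-g t) 0) volume 0 1 := by
    intro g ψ hψc hae
    constructor
    · rw [intervalIntegrable_iff_integrableOn_Ioc_of_le (by norm_num)]
      refine ((ContinuousOn.integrableOn_Icc (by fun_prop : ContinuousOn (fun t => max (ψ t) 0) (Icc (0:ℝ) 1))).mono_set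
        Ioc_subset_Icc_self).congr_fun_ae ?_
      filter_upwards [hae] with t ht
      rw [ht]
    · rw [intervalIntegrable_iff_integrableOn_Ioc_of_le (by norm_num)]
      refine ((ContinuousOn.integrableOn_Icc (by fun_prop : ContinuousOn (fun t => max (-ψ t) 0) (Icc (0:ℝ) 1))).mono_set
        Ioc_subset_Icc_self).congr_fun_ae ?_
      filter_upwards [hae] with t ht
      rw [ht]
  obtain ⟨hGp, hGm⟩ := hparts _ _ hGψc hGae
  obtain ⟨hHp, hHm⟩ := hparts _ _ hHψc hHae
  -- polynomial representations
  obtain ⟨S1, hS1d, hS1⟩ := Stmt9Aux3.poly_rep P hPdeg hGp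
  obtain ⟨S2, hS2d, hS2⟩ := Stmt9Aux3.poly_rep Q hQdeg hGm
  obtain ⟨S3, hS3d, hS3⟩ := Stmt9Aux3.poly_rep Q hQdeg hHp
  obtain ⟨S4, hS4d, hS4⟩ := Stmt9Aux3.poly_rep P hPdeg hHm
  have hdeg : ∀ a b : Polynomial ℝ, a.natDegree ≤ k → b.natDegree ≤ k → ∀ c : ℝ,
      (Polynomial.C c + a - b).natDegree ≤ k := by
    intro a b ha hb c
    refine le_trans (Polynomial.natDegree_sub_le _ _) ?_
    refine max_le (le_trans (Polynomial.natDegree_add_le _ _) ?_) hb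
    refine max_le ?_ ha
    simp [Polynomial.natDegree_C]
  -- the sandwich: pointwise comparison of Gop/Hop with ρ
  have hGle : ∀ x ∈ Icc (0:ℝ) 1, Gop y ρ x ≤ ρ x := by
    intro x hx
    have hint1 : IntervalIntegrable
        (fun t => (fun s => ρ s - omegaMod ρ s y) ((1 - y) * x + y * t)) volume 0 1 := by
      refine ContinuousOn.intervalIntegrable_of_Icc (by norm_num) ?_
      exact hφm.comp (by fun_prop) (fun t ht => Stmt9Aux2.affine_mem hy0 hy1 hx ht)
    have hle : ∀ t ∈ Icc (0:ℝ) 1,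
        (fun s => ρ s - omegaMod ρ s y) ((1 - y) * x + y * t) ≤ ρ x := by
      intro t ht
      have hst := Stmt9Aux2.affine_mem hy0 hy1 hx ht
      have habs : |((1 - y) * x + y * t) - x| ≤ y := by
        have h1 : ((1 - y) * x + y * t) - x = y * (t - x) := by ring
        rw [h1, abs_mul, abs_of_pos hy0]
        have h2 : |t - x| ≤ 1 := by
          rw [abs_le]
          constructor <;> [linarith [ht.1, hx.2]; linarith [ht.2, hx.1]]
        nlinarith
      have := Stmt9Aux.abs_sub_le_omegaMod hρ hy0.le hst hx habs
      have h3 : ρ ((1 - y) * x + y * t) - ρ x ≤ |ρ ((1 - y) * x + y * t) - ρ x| :=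
        le_abs_self _
      simp only
      linarith
    calc Gop y ρ x ≤ ∫ _ in (0:ℝ)..1, ρ x := by
          refine intervalIntegral.integral_mono_on (by norm_num) hint1
            intervalIntegrable_const hle
      _ = ρ x := by simp
  have hHge : ∀ x ∈ Icc (0:ℝ) 1, ρ x ≤ Hop y ρ x := by
    intro x hx
    have hint1 : IntervalIntegrable
        (fun t => (fun s => ρ s + omegaMod ρ s y) ((1 - y) * x + y * t)) volume 0 1 := by
      refine ContinuousOn.intervalIntegrable_of_Icc (by norm_num) ?_
      exact hφp.comp (by fun_prop) (fun t ht => Stmt9Aux2.affine_mem hy0 hy1 hx ht)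
    have hle : ∀ t ∈ Icc (0:ℝ) 1,
        ρ x ≤ (fun s => ρ s + omegaMod ρ s y) ((1 - y) * x + y * t) := by
      intro t ht
      have hst := Stmt9Aux2.affine_mem hy0 hy1 hx ht
      have habs : |((1 - y) * x + y * t) - x| ≤ y := by
        have h1 : ((1 - y) * x + y * t) - x = y * (t - x) := by ring
        rw [h1, abs_mul, abs_of_pos hy0]
        have h2 : |t - x| ≤ 1 := by
          rw [abs_le]
          constructor <;> [linarith [ht.1, hx.2]; linarith [ht.2, hx.1]]
        nlinarith
      have := Stmt9Aux.abs_sub_le_omegaMod hρ hy0.le hst hx habs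
      have h3 : ρ x - ρ ((1 - y) * x + y * t) ≤ |ρ ((1 - y) * x + y * t) - ρ x| := by
        rw [abs_sub_comm]; exact le_abs_self _
      simp only
      linarith
    calc ρ x = ∫ _ in (0:ℝ)..1, ρ x := by simp
      _ ≤ Hop y ρ x := by
          refine intervalIntegral.integral_mono_on (by norm_num) intervalIntegrable_const
            hint1 hle
  -- generic comparison of polynomial-weighted integrals with the step-function integral
  have hcmp : ∀ (m : ℝ → ℝ), IntervalIntegrable m volume 0 1 → (∀ t, 0 ≤ m t) →
      ∀ x ∈ Icc (0:ℝ) 1,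
      ((∫ t in (0:ℝ)..1, P.eval (x - t) * m t) ≤ (∫ t in (0:ℝ)..x, m t) ∧
       (∫ t in (0:ℝ)..x, m t) ≤ ∫ t in (0:ℝ)..1, Q.eval (x - t) * m t) := by
    intro m hm hm0 x hx
    have hxt : ∀ t ∈ Icc (0:ℝ) 1, x - t ∈ Icc (-1:ℝ) 1 := by
      intro t ht
      constructor <;> [linarith [ht.2, hx.1]; linarith [ht.1, hx.2]]
    have hintP : IntervalIntegrable (fun t => P.eval (x - t) * m t) volume 0 1 :=
      hm.continuousOn_mul ((P.continuous_aeval.comp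
        (continuous_const.sub continuous_id)).continuousOn)
    have hintQ : IntervalIntegrable (fun t => Q.eval (x - t) * m t) volume 0 1 :=
      hm.continuousOn_mul ((Q.continuous_aeval.comp
        (continuous_const.sub continuous_id)).continuousOn)
    have hintS : IntervalIntegrable (fun t => stepPhi (x - t) * m t) volume 0 1 :=
      Stmt9Aux3.stepPhi_mul_int hm subset_rfl
    have hstep := Stmt9Aux3.stepPhi_integral hm hx
    constructor
    · calc (∫ t in (0:ℝ)..1, P.eval (x - t) * m t)
          ≤ ∫ t in (0:ℝ)..1, stepPhi (x - t) * m t := by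
            refine intervalIntegral.integral_mono_on (by norm_num) hintP hintS ?_
            intro t ht
            exact mul_le_mul_of_nonneg_right ((hPQ _ (hxt t ht)).1) (hm0 t)
        _ = ∫ t in (0:ℝ)..x, m t := hstep
    · calc (∫ t in (0:ℝ)..x, m t) = ∫ t in (0:ℝ)..1, stepPhi (x - t) * m t := hstep.symm
        _ ≤ ∫ t in (0:ℝ)..1, Q.eval (x - t) * m t := by
            refine intervalIntegral.integral_mono_on (by norm_num) hintS hintQ ?_
            intro t ht
            exact mul_le_mul_of_nonneg_right ((hPQ _ (hxt t ht)).2) (hm0 t)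
  -- splitting ∫₀ˣ g into positive and negative parts
  have hsplit : ∀ (g : ℝ → ℝ), IntervalIntegrable (fun t => max (g t) 0) volume 0 1 →
      IntervalIntegrable (fun t => max (-g t) 0) volume 0 1 → ∀ x ∈ Icc (0:ℝ) 1,
      (∫ t in (0:ℝ)..x, g t) =
        (∫ t in (0:ℝ)..x, max (g t) 0) - ∫ t in (0:ℝ)..x, max (-g t) 0 := by
    intro g hgp hgm x hx
    have hsub : uIcc (0:ℝ) x ⊆ uIcc (0:ℝ) 1 := by
      rw [uIcc_of_le hx.1, uIcc_of_le (by norm_num : (0:ℝ) ≤ 1)]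
      exact Icc_subset_Icc le_rfl hx.2
    rw [← intervalIntegral.integral_sub (hgp.mono_set hsub) (hgm.mono_set hsub)]
    refine intervalIntegral.integral_congr fun t _ => ?_
    exact (max_zero_sub_max_neg_zero_eq_self (g t)).symm
  refine ⟨⟨Polynomial.C (Gop y ρ 0) + S1 - S2, hdeg _ _ hS1d hS2d _, ?_⟩,
    ⟨Polynomial.C (Hop y ρ 0) + S3 - S4, hdeg _ _ hS3d hS4d _, ?_⟩, ?_⟩
  · intro x hx
    have e1 : (∫ t in (0:ℝ)..1, P.eval (x - t) * max (deriv (Gop y ρ) t) 0)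
        = S1.eval x := hS1 x
    have e2 : (∫ t in (0:ℝ)..1, Q.eval (x - t) * max (-deriv (Gop y ρ) t) 0)
        = S2.eval x := hS2 x
    show Gop y ρ 0 + (∫ t in (0:ℝ)..1, P.eval (x - t) * max (deriv (Gop y ρ) t) 0)
        - (∫ t in (0:ℝ)..1, Q.eval (x - t) * max (-deriv (Gop y ρ) t) 0) = _
    rw [e1, e2]
    simp
  · intro x hx
    have e1 : (∫ t in (0:ℝ)..1, Q.eval (x - t) * max (deriv (Hop y ρ) t) 0)
        = S3.eval x := hS3 x
    have e2 : (∫ t in (0:ℝ)..1, P.eval (x - t) * max (-deriv (Hop y ρ) t) 0)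
        = S4.eval x := hS4 x
    show Hop y ρ 0 + (∫ t in (0:ℝ)..1, Q.eval (x - t) * max (deriv (Hop y ρ) t) 0)
        - (∫ t in (0:ℝ)..1, P.eval (x - t) * max (-deriv (Hop y ρ) t) 0) = _
    rw [e1, e2]
    simp
  · intro x hx
    constructor
    · -- lower bound
      have c1 := (hcmp _ hGp (fun t => le_max_right _ _) x hx).1
      have c2 := (hcmp _ hGm (fun t => le_max_right _ _) x hx).2
      have c3 := hsplit _ hGp hGm x hx
      have c4 := hGftc x hx
      have c5 := hGle x hx
      show Gop y ρ 0 + (∫ t in (0:ℝ)..1, P.eval (x - t) * max (deriv (Gop y ρ) t) 0)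
        - (∫ t in (0:ℝ)..1, Q.eval (x - t) * max (-deriv (Gop y ρ) t) 0) ≤ ρ x
      linarith
    · -- upper bound
      have c1 := (hcmp _ hHp (fun t => le_max_right _ _) x hx).2
      have c2 := (hcmp _ hHm (fun t => le_max_right _ _) x hx).1
      have c3 := hsplit _ hHp hHm x hx
      have c4 := hHftc x hx
      have c5 := hHge x hx
      show ρ x ≤ Hop y ρ 0 + (∫ t in (0:ℝ)..1, Q.eval (x - t) * max (deriv (Hop y ρ) t) 0)
        - (∫ t in (0:ℝ)..1, P.eval (x - t) * max (-deriv (Hop y ρ) t) 0)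
      linarith
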